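/- arXiv:0807.2423 — 2 statements merged into one kernel-verified Lean document; each statement's English description precedes it below -/
import Mathlib

section
/- Let 0 < n < L, r ≥ 1, and 1 ≤ i₁ < ⋯ < i_r ≤ L with i_r ≥ n + r. Then for the maximal value j = L − i_r + 1: if r ≥ 2, E_r(L,n;i₁,…,i_r;L−i_r+1) = β^{−(L−i_r+1)} · E_{r−1}(i_r−1, n; i₁,…,i_{r−1}; 1), and if r = 1, E_1(L,n;i₁;L−i₁+1) = β^{−(L−i₁+1)} · Z^{α,β}(i₁−1, n). -/
open scoped BigOperators Classical
open Filter Topology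

noncomputable section

namespace TASEP

/-- The matrix `X₀`: ones on the diagonal and the subdiagonal. -/
def X0 : ℕ → ℕ → ℝ := fun i k => if k = i ∨ k + 1 = i then 1 else 0

/-- The matrix `X₁`: ones on the diagonal and the superdiagonal. -/
def X1 : ℕ → ℕ → ℝ := fun i k => if k = i ∨ k = i + 1 then 1 else 0

/-- The matrix `X₂`: a single one in the `(0,0)` entry. -/
def X2 : ℕ → ℕ → ℝ := fun i k => if i = 0 ∧ k = 0 then 1 else 0

/-- The matrix associated to a species label (`0` = hole, `1` = first class
particle, `2` = second class particle). -/
def Xmat : Fin 3 → ℕ → ℕ → ℝ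
  | 0 => X0
  | 1 => X1
  | 2 => X2

/-- Product of two infinite matrices (well defined here since the relevant
matrices have finitely many nonzero entries in each row and column). -/
def mul (A B : ℕ → ℕ → ℝ) : ℕ → ℕ → ℝ := fun i k => ∑' j, A i j * B j k

/-- The row vector `⟨W_α|`, with `i`-th entry `((1-α)/α)^i`. -/
def W (α : ℝ) : ℕ → ℝ := fun i => ((1 - α) / α) ^ i

/-- The column vector `|V_β⟩`, with `i`-th entry `((1-β)/β)^i`. -/
def V (β : ℝ) : ℕ → ℝ := fun i => ((1 - β) / β) ^ i

/-- Row vector times matrix. -/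
def rowMul (v : ℕ → ℝ) (A : ℕ → ℕ → ℝ) : ℕ → ℝ := fun k => ∑' i, v i * A i k

/-- Matrix times column vector. -/
def colMul (A : ℕ → ℕ → ℝ) (v : ℕ → ℝ) : ℕ → ℝ := fun i => ∑' k, A i k * v k

/-- Row vector times a word of matrices. -/
def rowWord (v : ℕ → ℝ) : List (Fin 3) → ℕ → ℝ
  | [] => v
  | a :: rest => rowWord (rowMul v (Xmat a)) rest

/-- Matrix element `⟨v| X_{σ₁} ⋯ X_{σ_p} |w⟩` of a word of matrices. -/
def pairing (v : ℕ → ℝ) (word : List (Fin 3)) (w : ℕ → ℝ) : ℝ :=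
  ∑' i, rowWord v word i * w i

/-- Weight `w^{α,β}(τ) = ⟨W_α| X_{τ₁} ⋯ X_{τ_L} |V_β⟩` of a configuration. -/
def wt (α β : ℝ) {L : ℕ} (τ : Fin L → Fin 3) : ℝ :=
  pairing (W α) (List.ofFn τ) (V β)

/-- Number of second class particles in a configuration. -/
def numTwos {L : ℕ} (τ : Fin L → Fin 3) : ℕ :=
  (Finset.univ.filter fun i => τ i = 2).card

/-- `Y L n`: configurations of length `L` with exactly `n` second class particles. -/
def Y (L n : ℕ) : Finset (Fin L → Fin 3) :=
  Finset.univ.filter fun τ => numTwos τ = n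

/-- The partition function `Z^{α,β}(L,n)`. -/
def Z (α β : ℝ) (L n : ℕ) : ℝ := ∑ τ ∈ Y L n, wt α β τ

/-- Value of a configuration at the 1-based site `s` (defaulting to `0` off the lattice). -/
def val {L : ℕ} (τ : Fin L → Fin 3) (s : ℕ) : Fin 3 :=
  if h : 1 ≤ s ∧ s ≤ L then τ ⟨s - 1, by omega⟩ else 0

/-- `E α β L n r sites j` is `E_r(L,n;i₁,…,i_r;j)`: the sum of weights of
configurations in `Y L n` with a first class particle at each of the sites
`i₁,…,i_{r-1}` and a block of `j` consecutive first class particles starting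
at site `i_r`. -/
def E (α β : ℝ) (L n r : ℕ) (sites : Fin r → ℕ) (j : ℕ) : ℝ :=
  ∑ τ ∈ (Y L n).filter (fun τ =>
      (∀ m : Fin r, (m : ℕ) + 1 ≠ r → val τ (sites m) = 1) ∧
      (∀ m : Fin r, (m : ℕ) + 1 = r → ∀ t ∈ Finset.range j, val τ (sites m + t) = 1)),
    wt α β τ

end TASEP

namespace TASEP

/-! ### Auxiliary lemmas -/

/-- A sequence vanishing from index `N` on. -/
def bdd (u : ℕ → ℝ) (N : ℕ) : Prop := ∀ i, N ≤ i → u i = 0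

lemma tsum_of_bdd {u : ℕ → ℝ} {N : ℕ} (h : bdd u N) :
    ∑' i, u i = ∑ i ∈ Finset.range N, u i := by
  refine tsum_eq_sum ?_
  intro i hi
  refine h i ?_
  simp only [Finset.mem_range] at hi
  omega

lemma rowMul_X1_apply (u : ℕ → ℝ) (k : ℕ) :
    rowMul u X1 k = u k + (if k = 0 then 0 else u (k - 1)) := by
  cases k with
  | zero =>
    rw [rowMul, tsum_eq_single 0 (by
      intro i hi
      simp only [X1]
      rw [if_neg (show ¬((0:ℕ) = i ∨ (0:ℕ) = i + 1) by omega), mul_zero])]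
    simp [X1]
  | succ m =>
    rw [rowMul, tsum_eq_sum (s := ({m, m + 1} : Finset ℕ)) (by
      intro i hi
      simp only [Finset.mem_insert, Finset.mem_singleton] at hi
      push_neg at hi
      simp only [X1]
      rw [if_neg (show ¬(m + 1 = i ∨ m + 1 = i + 1) by omega), mul_zero])]
    rw [Finset.sum_pair (show m ≠ m + 1 by omega)]
    have h1 : X1 m (m + 1) = 1 := by simp [X1]
    have h2 : X1 (m + 1) (m + 1) = 1 := by simp [X1]
    rw [h1, h2, if_neg (Nat.succ_ne_zero m), Nat.add_sub_cancel]
    ring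

lemma rowMul_X0_apply (u : ℕ → ℝ) (k : ℕ) :
    rowMul u X0 k = u k + u (k + 1) := by
  rw [rowMul, tsum_eq_sum (s := ({k, k + 1} : Finset ℕ)) (by
    intro i hi
    simp only [Finset.mem_insert, Finset.mem_singleton] at hi
    push_neg at hi
    simp only [X0]
    rw [if_neg (show ¬(k = i ∨ k + 1 = i) by omega), mul_zero])]
  rw [Finset.sum_pair (show k ≠ k + 1 by omega)]
  have h1 : X0 k k = 1 := by simp [X0]
  have h2 : X0 (k + 1) k = 1 := by simp [X0]
  rw [h1, h2, mul_one, mul_one]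

lemma rowMul_X2_apply (u : ℕ → ℝ) (k : ℕ) :
    rowMul u X2 k = if k = 0 then u 0 else 0 := by
  rw [rowMul, tsum_eq_single 0 (by
    intro i hi
    simp only [X2]
    rw [if_neg (show ¬(i = 0 ∧ k = 0) by omega), mul_zero])]
  simp only [X2]
  by_cases hk : k = 0 <;> simp [hk]

lemma Xmat_zero : Xmat 0 = X0 := rfl
lemma Xmat_one : Xmat 1 = X1 := rfl
lemma Xmat_two : Xmat 2 = X2 := rfl

lemma bdd_rowMul {u : ℕ → ℝ} {N : ℕ} (h : bdd u N) (a : Fin 3) :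
    bdd (rowMul u (Xmat a)) (N + 1) := by
  have h0 : bdd (rowMul u X0) (N + 1) := by
    intro i hi
    rw [rowMul_X0_apply, h i (by omega), h (i + 1) (by omega), add_zero]
  have h1 : bdd (rowMul u X1) (N + 1) := by
    intro i hi
    rw [rowMul_X1_apply, h i (by omega), if_neg (show ¬ i = 0 by omega),
      h (i - 1) (by omega), add_zero]
  have h2 : bdd (rowMul u X2) (N + 1) := by
    intro i hi
    rw [rowMul_X2_apply, if_neg (show ¬ i = 0 by omega)]
  fin_cases a
  · exact h0
  · exact h1
  · exact h2

lemma bdd_rowWord {u : ℕ → ℝ} {N : ℕ} (h : bdd u N) (w : List (Fin 3)) :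
    bdd (rowWord u w) (N + w.length) := by
  induction w generalizing u N with
  | nil => simpa [rowWord] using h
  | cons a t ih =>
    have := ih (bdd_rowMul h a)
    rw [rowWord]
    intro i hi
    exact this i (by simp at hi ⊢; omega)

lemma bdd_rowMul_X2 (u : ℕ → ℝ) : bdd (rowMul u X2) 1 := by
  intro i hi
  rw [rowMul_X2_apply, if_neg (show ¬ i = 0 by omega)]

lemma exists_bdd_of_two_mem (v : ℕ → ℝ) (w : List (Fin 3)) (h : (2 : Fin 3) ∈ w) :
    ∃ N, bdd (rowWord v w) N := by
  induction w generalizing v with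
  | nil => simp at h
  | cons a t ih =>
    rcases List.mem_cons.mp h with h2 | h2
    · rw [rowWord, ← h2, Xmat_two]
      exact ⟨1 + t.length, bdd_rowWord (bdd_rowMul_X2 v) t⟩
    · rw [rowWord]
      exact ih _ h2

lemma V_zero (β : ℝ) : V β 0 = 1 := pow_zero _

lemma V_succ (β : ℝ) (i : ℕ) : V β (i + 1) = V β i * ((1 - β) / β) := pow_succ _ _

lemma step_X1 {u : ℕ → ℝ} {N : ℕ} (h : bdd u N) {β : ℝ} (hβ : 0 < β) :
    ∑' i, rowMul u X1 i * V β i = β⁻¹ * ∑' i, u i * V β i := by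
  have hb1 : bdd (fun i => rowMul u X1 i * V β i) (N + 1) := by
    intro i hi
    show rowMul u X1 i * V β i = 0
    rw [rowMul_X1_apply, h i (by omega), if_neg (show ¬ i = 0 by omega), h (i - 1) (by omega)]
    ring
  have hb2 : bdd (fun i => u i * V β i) N := fun i hi => by
    show u i * V β i = 0
    rw [h i hi]; ring
  rw [tsum_of_bdd hb1, tsum_of_bdd hb2]
  have hsplit : ∑ i ∈ Finset.range (N + 1), rowMul u X1 i * V β i
      = (∑ i ∈ Finset.range (N + 1), u i * V β i)
        + ∑ i ∈ Finset.range (N + 1), (if i = 0 then (0:ℝ) else u (i - 1)) * V β i := by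
    rw [← Finset.sum_add_distrib]
    exact Finset.sum_congr rfl fun i _ => by rw [rowMul_X1_apply]; ring
  have hA : ∑ i ∈ Finset.range (N + 1), u i * V β i
      = ∑ i ∈ Finset.range N, u i * V β i := by
    rw [Finset.sum_range_succ, h N le_rfl, zero_mul, add_zero]
  have hB : ∑ i ∈ Finset.range (N + 1), (if i = 0 then (0:ℝ) else u (i - 1)) * V β i
      = (∑ i ∈ Finset.range N, u i * V β i) * ((1 - β) / β) := by
    rw [Finset.sum_range_succ']
    have hz : (if (0:ℕ) = 0 then (0:ℝ) else u (0 - 1)) * V β 0 = 0 := by simp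
    rw [hz, add_zero, Finset.sum_mul]
    apply Finset.sum_congr rfl
    intro i _
    rw [if_neg (Nat.succ_ne_zero i), Nat.add_sub_cancel, V_succ]
    ring
  rw [hsplit, hA, hB]
  have hβ' : β ≠ 0 := ne_of_gt hβ
  field_simp
  ring

lemma pairing_replicate {β : ℝ} (hβ : 0 < β) (j : ℕ) :
    ∀ {u : ℕ → ℝ} {N : ℕ}, bdd u N →
    ∑' i, rowWord u (List.replicate j 1) i * V β i = (β⁻¹) ^ j * ∑' i, u i * V β i := by
  induction j with
  | zero => intro u N h; simp [rowWord]
  | succ j ih =>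
    intro u N h
    have hb : bdd (rowMul u X1) (N + 1) := by
      have := bdd_rowMul h 1
      rwa [Xmat_one] at this
    rw [List.replicate_succ, rowWord, Xmat_one, ih hb, step_X1 h hβ, pow_succ]
    ring

lemma rowWord_append (v : ℕ → ℝ) (w1 w2 : List (Fin 3)) :
    rowWord v (w1 ++ w2) = rowWord (rowWord v w1) w2 := by
  induction w1 generalizing v with
  | nil => simp [rowWord]
  | cons a t ih => rw [List.cons_append, rowWord, rowWord, ih]

lemma pairing_append_replicate (v : ℕ → ℝ) (w : List (Fin 3)) (hw : (2 : Fin 3) ∈ w)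
    {β : ℝ} (hβ : 0 < β) (j : ℕ) :
    pairing v (w ++ List.replicate j 1) (V β) = (β⁻¹) ^ j * pairing v w (V β) := by
  obtain ⟨N, hN⟩ := exists_bdd_of_two_mem v w hw
  rw [pairing, pairing, rowWord_append]
  exact pairing_replicate hβ j hN


lemma numTwos_ext {p j : ℕ} (σ : Fin p → Fin 3) :
    numTwos (fun k : Fin (p + j) => if h : (k : ℕ) < p then σ ⟨(k : ℕ), h⟩ else 1)
      = numTwos σ := by
  unfold numTwos
  rw [Finset.card_filter, Finset.card_filter, Fin.sum_univ_add]
  have h1 : ∀ i : Fin p,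
      (if (if h : ((Fin.castAdd j i : Fin (p + j)) : ℕ) < p
            then σ ⟨((Fin.castAdd j i : Fin (p + j)) : ℕ), h⟩ else 1) = 2 then (1:ℕ) else 0)
        = if σ i = 2 then 1 else 0 := by
    intro i
    rw [dif_pos (show ((Fin.castAdd j i : Fin (p + j)) : ℕ) < p from i.isLt)]
    exact congrArg (fun x => if σ x = 2 then (1:ℕ) else 0) (Fin.ext rfl)
  have h2 : ∀ i : Fin j,
      (if (if h : ((Fin.natAdd p i : Fin (p + j)) : ℕ) < p
            then σ ⟨((Fin.natAdd p i : Fin (p + j)) : ℕ), h⟩ else 1) = 2 then (1:ℕ) else 0)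
        = 0 := by
    intro i
    rw [dif_neg (show ¬ ((Fin.natAdd p i : Fin (p + j)) : ℕ) < p from by
      simp [Fin.natAdd])]
    simp
  rw [Finset.sum_congr rfl fun i _ => h1 i, Finset.sum_congr rfl fun i _ => h2 i,
    Finset.sum_const_zero, add_zero]

lemma numTwos_restrict {p j : ℕ} (τ : Fin (p + j) → Fin 3)
    (htail : ∀ k : Fin (p + j), p ≤ (k : ℕ) → τ k = 1) :
    numTwos (fun k : Fin p => τ ⟨(k : ℕ), by omega⟩) = numTwos τ := by
  unfold numTwos
  rw [Finset.card_filter, Finset.card_filter, Fin.sum_univ_add]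
  have h2 : ∀ i : Fin j, (if τ (Fin.natAdd p i) = 2 then (1:ℕ) else 0) = 0 := by
    intro i
    rw [htail _ (by simp [Fin.natAdd])]
    simp
  rw [Finset.sum_congr rfl fun i _ => h2 i, Finset.sum_const_zero, add_zero]
  apply Finset.sum_congr rfl
  intro i _
  exact congrArg (fun x => if τ x = 2 then (1:ℕ) else 0) (Fin.ext rfl)

lemma val_ext_low {p j : ℕ} (σ : Fin p → Fin 3) {s : ℕ} (h1 : 1 ≤ s) (h2 : s ≤ p) :
    val (fun k : Fin (p + j) => if h : (k : ℕ) < p then σ ⟨(k : ℕ), h⟩ else 1) s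
      = val σ s := by
  have e1 : val (fun k : Fin (p + j) => if h : (k : ℕ) < p then σ ⟨(k : ℕ), h⟩ else 1) s
      = σ ⟨s - 1, by omega⟩ := by
    rw [val, dif_pos (show 1 ≤ s ∧ s ≤ p + j from ⟨h1, by omega⟩)]
    show (if h : s - 1 < p then σ ⟨s - 1, h⟩ else 1) = _
    rw [dif_pos (show s - 1 < p by omega)]
  rw [e1, val, dif_pos (show 1 ≤ s ∧ s ≤ p from ⟨h1, h2⟩)]

lemma val_ext_high {p j : ℕ} (σ : Fin p → Fin 3) {s : ℕ} (h1 : p < s) (h2 : s ≤ p + j) :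
    val (fun k : Fin (p + j) => if h : (k : ℕ) < p then σ ⟨(k : ℕ), h⟩ else 1) s = 1 := by
  rw [val, dif_pos ⟨by omega, h2⟩]
  show (if h : s - 1 < p then σ ⟨s - 1, h⟩ else 1) = 1
  rw [dif_neg (show ¬ s - 1 < p by omega)]

lemma val_restrict {p j : ℕ} (τ : Fin (p + j) → Fin 3) {s : ℕ} (h1 : 1 ≤ s) (h2 : s ≤ p) :
    val (fun k : Fin p => τ ⟨(k : ℕ), by omega⟩) s = val τ s := by
  rw [val, val, dif_pos ⟨h1, h2⟩, dif_pos ⟨h1, by omega⟩]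

lemma wt_ext (α : ℝ) {β : ℝ} (hβ : 0 < β) {p j : ℕ} (σ : Fin p → Fin 3)
    (h2 : ∃ k, σ k = 2) :
    wt α β (fun k : Fin (p + j) => if h : (k : ℕ) < p then σ ⟨(k : ℕ), h⟩ else 1)
      = (β⁻¹) ^ j * wt α β σ := by
  have hofn : List.ofFn (fun k : Fin (p + j) => if h : (k : ℕ) < p then σ ⟨(k : ℕ), h⟩ else 1)
      = List.ofFn σ ++ List.replicate j (1 : Fin 3) := by
    rw [List.ofFn_add]
    congr 1
    · apply congrArg
      funext i
      rw [dif_pos (show ((Fin.castLE (Nat.le_add_right p j) i : Fin (p + j)) : ℕ) < p from i.isLt)]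
      exact congrArg σ (Fin.ext rfl)
    · rw [← List.ofFn_const j (1 : Fin 3)]
      apply congrArg
      funext i
      rw [dif_neg (show ¬ ((Fin.natAdd p i : Fin (p + j)) : ℕ) < p from by simp [Fin.natAdd])]
  rw [wt, wt, hofn]
  refine pairing_append_replicate (W α) _ ?_ hβ j
  rw [List.mem_ofFn]
  obtain ⟨k, hk⟩ := h2
  exact ⟨k, hk⟩

lemma E_eq (α β : ℝ) (hβ : 0 < β) (L n r p j : ℕ) (sites : Fin r → ℕ) (hr : 0 < r)
    (h0n : 0 < n) (hL : L = p + j)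
    (hmono : StrictMono sites) (hfirst : 1 ≤ sites ⟨0, hr⟩)
    (hlast : sites ⟨r - 1, by omega⟩ = p + 1) :
    E α β L n r sites j
      = (β⁻¹) ^ j *
        ∑ σ ∈ (Y p n).filter (fun σ => ∀ m : Fin r, (m : ℕ) + 1 ≠ r → val σ (sites m) = 1),
          wt α β σ := by
  subst hL
  rw [E, Finset.mul_sum]
  have hsite_ge : ∀ m : Fin r, 1 ≤ sites m := by
    intro m
    exact le_trans hfirst (hmono.monotone (by simp [Fin.le_def]))
  have hsite_le : ∀ m : Fin r, (m : ℕ) + 1 ≠ r → sites m ≤ p := by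
    intro m hm
    have hlt : m < (⟨r - 1, by omega⟩ : Fin r) := by
      rw [Fin.lt_def]
      show (m : ℕ) < r - 1
      have := m.isLt
      omega
    have hx := hmono hlt
    rw [hlast] at hx
    omega
  have tail : ∀ τ ∈ (Y (p + j) n).filter (fun τ =>
      (∀ m : Fin r, (m : ℕ) + 1 ≠ r → val τ (sites m) = 1) ∧
      (∀ m : Fin r, (m : ℕ) + 1 = r → ∀ t ∈ Finset.range j, val τ (sites m + t) = 1)),
      ∀ k : Fin (p + j), p ≤ (k : ℕ) → τ k = 1 := by
    intro τ hτ k hk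
    rw [Finset.mem_filter] at hτ
    have h2 := hτ.2.2 ⟨r - 1, by omega⟩ (show r - 1 + 1 = r by omega) ((k : ℕ) - p)
      (Finset.mem_range.mpr (by have := k.isLt; omega))
    rw [hlast] at h2
    rw [val, dif_pos (show 1 ≤ p + 1 + ((k : ℕ) - p) ∧ p + 1 + ((k : ℕ) - p) ≤ p + j from
      ⟨by omega, by have := k.isLt; omega⟩)] at h2
    rw [show k = (⟨p + 1 + ((k : ℕ) - p) - 1, by have := k.isLt; omega⟩ : Fin (p + j)) from
      Fin.ext (show (k : ℕ) = p + 1 + ((k : ℕ) - p) - 1 by omega)]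
    exact h2
  refine Finset.sum_nbij' (i := fun τ => fun k : Fin p => τ ⟨(k : ℕ), by omega⟩)
    (j := fun σ => fun k : Fin (p + j) => if h : (k : ℕ) < p then σ ⟨(k : ℕ), h⟩ else 1)
    ?_ ?_ ?_ ?_ ?_
  · -- maps S into T
    intro τ hτ
    have htail := tail τ hτ
    rw [Finset.mem_filter] at hτ ⊢
    obtain ⟨hY, hC⟩ := hτ
    refine ⟨?_, ?_⟩
    · rw [Y, Finset.mem_filter]
      refine ⟨Finset.mem_univ _, ?_⟩
      rw [numTwos_restrict τ htail]
      exact (Finset.mem_filter.mp hY).2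
    · intro m hm
      rw [val_restrict τ (hsite_ge m) (hsite_le m hm)]
      exact hC.1 m hm
  · -- maps T into S
    intro σ hσ
    rw [Finset.mem_filter] at hσ ⊢
    obtain ⟨hY, hC⟩ := hσ
    refine ⟨?_, ?_, ?_⟩
    · rw [Y, Finset.mem_filter]
      refine ⟨Finset.mem_univ _, ?_⟩
      rw [numTwos_ext]
      exact (Finset.mem_filter.mp hY).2
    · intro m hm
      rw [val_ext_low σ (hsite_ge m) (hsite_le m hm)]
      exact hC m hm
    · intro m hm t ht
      rw [show m = (⟨r - 1, by omega⟩ : Fin r) from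
        Fin.ext (show (m : ℕ) = r - 1 by omega), hlast]
      exact val_ext_high σ (by omega) (by
        have := Finset.mem_range.mp ht
        omega)
  · -- left inverse
    intro τ hτ
    have htail := tail τ hτ
    funext k
    show (if h : (k : ℕ) < p then τ ⟨(k : ℕ), by omega⟩ else 1) = τ k
    by_cases h : (k : ℕ) < p
    · rw [dif_pos h]
    · rw [dif_neg h, htail k (by omega)]
  · -- right inverse
    intro σ hσ
    funext k
    show (if h : (k : ℕ) < p then σ ⟨(k : ℕ), h⟩ else 1) = σ k
    rw [dif_pos k.isLt]
  · -- weights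
    intro τ hτ
    have htail := tail τ hτ
    have hre : (fun k : Fin (p + j) =>
        if h : (k : ℕ) < p then τ ⟨(k : ℕ), by omega⟩ else 1) = τ := by
      funext k
      by_cases h : (k : ℕ) < p
      · rw [dif_pos h]
      · rw [dif_neg h, htail k (by omega)]
    have hn : numTwos (fun k : Fin p => τ ⟨(k : ℕ), by omega⟩) = n := by
      rw [numTwos_restrict τ htail]
      exact (Finset.mem_filter.mp (Finset.mem_filter.mp hτ).1).2
    have h2 : ∃ k : Fin p, (fun k : Fin p => τ ⟨(k : ℕ), by omega⟩) k = 2 := by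
      by_contra hc
      push_neg at hc
      have : numTwos (fun k : Fin p => τ ⟨(k : ℕ), by omega⟩) = 0 := by
        unfold numTwos
        rw [Finset.card_eq_zero, Finset.filter_eq_empty_iff]
        intro k _
        exact hc k
      omega
    calc wt α β τ
        = wt α β (fun k : Fin (p + j) =>
            if h : (k : ℕ) < p then τ ⟨(k : ℕ), by omega⟩ else 1) := by rw [hre]
      _ = (β⁻¹) ^ j * wt α β (fun k : Fin p => τ ⟨(k : ℕ), by omega⟩) :=
          wt_ext α hβ _ h2

set_option maxHeartbeats 1000000 in
/-- boundary condition, Case 1: if `i_r ≥ n + r` then for the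
maximal value `j = L − i_r + 1`:
for `r ≥ 2`, `E_r(L,n;i₁,…,i_r;L−i_r+1) = β^{−(L−i_r+1)} E_{r−1}(i_r−1,n;i₁,…,i_{r−1};1)`,
and for `r = 1`, `E_1(L,n;i₁;L−i₁+1) = β^{−(L−i₁+1)} Z^{α,β}(i₁−1,n)`. -/
theorem E_max_j_case1 (α β : ℝ)
    (hα : α ∈ Set.Ioc (0 : ℝ) 1) (hβ : β ∈ Set.Ioc (0 : ℝ) 1)
    (L n r : ℕ) (sites : Fin r → ℕ)
    (h0n : 0 < n) (hnL : n < L) (hr : 1 ≤ r)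
    (hmono : StrictMono sites)
    (hfirst : 1 ≤ sites ⟨0, by omega⟩)
    (hlastL : sites ⟨r - 1, by omega⟩ ≤ L)
    (hlastn : n + r ≤ sites ⟨r - 1, by omega⟩) :
    (2 ≤ r →
      E α β L n r sites (L - sites ⟨r - 1, by omega⟩ + 1)
        = (β ^ (L - sites ⟨r - 1, by omega⟩ + 1))⁻¹ *
          E α β (sites ⟨r - 1, by omega⟩ - 1) n (r - 1)
            (fun m : Fin (r - 1) => sites ⟨(m : ℕ), by have := m.isLt; omega⟩) 1) ∧
    (r = 1 →
      E α β L n r sites (L - sites ⟨r - 1, by omega⟩ + 1)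
        = (β ^ (L - sites ⟨r - 1, by omega⟩ + 1))⁻¹ *
          Z α β (sites ⟨r - 1, by omega⟩ - 1) n) := by
  have hβ0 : 0 < β := hβ.1
  have hi1 : 1 ≤ sites ⟨r - 1, by omega⟩ :=
    le_trans hfirst (hmono.monotone (by simp [Fin.le_def]))
  constructor
  · intro hr2
    have key := E_eq α β hβ0 L n r (sites ⟨r - 1, by omega⟩ - 1)
        (L - sites ⟨r - 1, by omega⟩ + 1) sites hr h0n (by omega) hmono hfirst
        (Nat.sub_add_cancel hi1).symm
    refine Eq.trans key (congrArg₂ (· * ·) (inv_pow β _) ?_)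
    unfold E
    refine Finset.sum_congr (Finset.filter_congr ?_) (fun _ _ => rfl)
    intro σ hσ
    constructor
    · intro hC
      constructor
      · intro m _
        exact hC ⟨(m : ℕ), by omega⟩ (by
          show (m : ℕ) + 1 ≠ r
          have := m.isLt
          omega)
      · intro m _ t ht
        have ht0 : t = 0 := by
          have := Finset.mem_range.mp ht
          omega
        subst ht0
        rw [add_zero]
        exact hC ⟨(m : ℕ), by omega⟩ (by
          show (m : ℕ) + 1 ≠ r
          have := m.isLt
          omega)
    · intro hC m hm
      have hmlt : (m : ℕ) < r - 1 := by
        have := m.isLt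
        omega
      by_cases hc : (m : ℕ) + 1 = r - 1
      · have h0 := hC.2 ⟨(m : ℕ), hmlt⟩ (by show (m : ℕ) + 1 = r - 1; exact hc) 0
          (Finset.mem_range.mpr Nat.one_pos)
        rw [add_zero] at h0
        exact h0
      · exact hC.1 ⟨(m : ℕ), hmlt⟩ (by show ¬((m : ℕ) + 1 = r - 1); exact hc)
  · intro hr1
    subst hr1
    have key := E_eq α β hβ0 L n 1 (sites ⟨1 - 1, by omega⟩ - 1)
        (L - sites ⟨1 - 1, by omega⟩ + 1) sites (by omega) h0n (by omega) hmono hfirst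
        (Nat.sub_add_cancel hi1).symm
    refine Eq.trans key (congrArg₂ (· * ·) (inv_pow β _) ?_)
    unfold Z
    refine Finset.sum_congr ?_ (fun _ _ => rfl)
    apply Finset.filter_true_of_mem
    intro σ _ m hm
    exact absurd (show (m : ℕ) + 1 = 1 by have := m.isLt; omega) hm

end TASEP
end
end

section
/- (Normalization of the boundary gap distribution) Let β ∈ (0,1] and let u ≥ 0 satisfy u < β(1−β) if β ≤ 1/2 and u ≤ 1/4 if β > 1/2. Then the series Σ_{l=0}^∞ u^l Z^{1,β}(l, 0) converges and equals 2β/(β(1+√(1−4u)) − 2u); equivalently, p^{u,β}(l) = ((β(1+√(1−4u)) − 2u)/(2β)) · u^l Z^{1,β}(l,0), l = 0,1,2,…, is a probability distribution on the nonnegative integers. -/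
open scoped BigOperators Classical
open Filter Topology

noncomputable section

namespace TASEP


lemma rowMul_X0 (v : ℕ → ℝ) (k : ℕ) : rowMul v X0 k = v k + v (k + 1) := by
  have h : ∀ i ∉ ({k, k + 1} : Finset ℕ), v i * X0 i k = 0 := by
    intro i hi
    simp only [Finset.mem_insert, Finset.mem_singleton, not_or] at hi
    rw [X0, if_neg (by omega), mul_zero]
  rw [rowMul, tsum_eq_sum h, Finset.sum_insert (by simp), Finset.sum_singleton]
  rw [X0, X0, if_pos (by omega), if_pos (by omega)]
  ring

lemma rowMul_X1 (v : ℕ → ℝ) (k : ℕ) :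
    rowMul v X1 k = v k + if k = 0 then 0 else v (k - 1) := by
  rcases k with _ | m
  · have h : ∀ i ∉ ({0} : Finset ℕ), v i * X1 i 0 = 0 := by
      intro i hi
      simp only [Finset.mem_singleton] at hi
      rw [X1, if_neg (by omega), mul_zero]
    rw [rowMul, tsum_eq_sum h, Finset.sum_singleton, X1, if_pos (by omega)]
    simp
  · have h : ∀ i ∉ ({m + 1, m} : Finset ℕ), v i * X1 i (m + 1) = 0 := by
      intro i hi
      simp only [Finset.mem_insert, Finset.mem_singleton, not_or] at hi
      rw [X1, if_neg (by omega), mul_zero]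
    rw [rowMul, tsum_eq_sum h, Finset.sum_insert (by simp), Finset.sum_singleton]
    rw [X1, X1, if_pos (by omega), if_pos (by omega)]
    simp

lemma rowMul_X2 (v : ℕ → ℝ) (k : ℕ) :
    rowMul v X2 k = if k = 0 then v 0 else 0 := by
  have h : ∀ i ∉ ({0} : Finset ℕ), v i * X2 i k = 0 := by
    intro i hi
    simp only [Finset.mem_singleton] at hi
    rw [X2, if_neg (by omega), mul_zero]
  rw [rowMul, tsum_eq_sum h, Finset.sum_singleton, X2]
  rcases eq_or_ne k 0 with hk | hk <;> simp [hk]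

lemma rowWord_cons (v : ℕ → ℝ) (a : Fin 3) (w : List (Fin 3)) :
    rowWord v (a :: w) = rowWord (rowMul v (Xmat a)) w := rfl

lemma rowWord_vanish : ∀ (w : List (Fin 3)) (v : ℕ → ℝ) (n : ℕ),
    (∀ i, n ≤ i → v i = 0) → ∀ i, n + w.length ≤ i → rowWord v w i = 0 := by
  intro w
  induction w with
  | nil => intro v n hv i hi; exact hv i (by simpa using hi)
  | cons a rest ih =>
    intro v n hv i hi
    rw [rowWord_cons]
    refine ih (rowMul v (Xmat a)) (n + 1) ?_ i (by simp only [List.length_cons] at hi ⊢; omega)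
    intro j hj
    fin_cases a
    · show rowMul v X0 j = 0
      rw [rowMul_X0, hv j (by omega), hv (j + 1) (by omega), add_zero]
    · show rowMul v X1 j = 0
      rw [rowMul_X1, hv j (by omega), if_neg (by omega), hv (j - 1) (by omega), add_zero]
    · show rowMul v X2 j = 0
      rw [rowMul_X2, if_neg (by omega)]

lemma W_one : W 1 = fun i => if i = 0 then 1 else 0 := by
  funext i
  rw [W]
  norm_num
  rcases eq_or_ne i 0 with h | h <;> simp [h]

/-- One step of the transfer recursion. -/
def step (v : ℕ → ℝ) : ℕ → ℝ :=
  fun k => (v k + v (k + 1)) + (v k + if k = 0 then 0 else v (k - 1))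

lemma step_add (v w : ℕ → ℝ) :
    step (fun k => v k + w k) = fun k => step v k + step w k := by
  funext k
  simp only [step]
  rcases eq_or_ne k 0 with h | h <;> simp [h] <;> ring

lemma step_iter_add : ∀ (L : ℕ) (v w : ℕ → ℝ),
    step^[L] (fun k => v k + w k) = fun k => step^[L] v k + step^[L] w k := by
  intro L
  induction L with
  | zero => intro v w; rfl
  | succ L ih =>
    intro v w
    rw [Function.iterate_succ_apply, Function.iterate_succ_apply,
      Function.iterate_succ_apply, step_add, ih]

lemma mem_Y_zero {L : ℕ} (τ : Fin L → Fin 3) : τ ∈ Y L 0 ↔ ∀ i, τ i ≠ 2 := by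
  simp [Y, numTwos, Finset.card_eq_zero, Finset.filter_eq_empty_iff]

lemma ofFn_cons {L : ℕ} (a : Fin 3) (σ : Fin L → Fin 3) :
    List.ofFn (Fin.cons a σ) = a :: List.ofFn σ := by
  rw [List.ofFn_succ]
  simp

lemma sum_rowWord : ∀ (L : ℕ) (v : ℕ → ℝ) (k : ℕ),
    ∑ τ ∈ Y L 0, rowWord v (List.ofFn τ) k = step^[L] v k := by
  intro L
  induction L with
  | zero =>
    intro v k
    have huniv : Y 0 0 = Finset.univ :=
      Finset.eq_univ_iff_forall.2 fun τ => (mem_Y_zero τ).2 fun i => i.elim0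
    rw [huniv, Finset.univ_unique, Finset.sum_singleton]
    simp [rowWord]
  | succ L ih =>
    intro v k
    have hfil : Y (L + 1) 0
        = Finset.univ.filter fun τ : Fin (L + 1) → Fin 3 => ∀ i, τ i ≠ 2 := by
      ext τ; rw [mem_Y_zero]; simp
    rw [hfil, Finset.sum_filter,
      ← Equiv.sum_comp (Fin.consEquiv fun _ : Fin (L + 1) => Fin 3)
        (fun τ => if (∀ i, τ i ≠ 2) then rowWord v (List.ofFn τ) k else 0),
      Fintype.sum_prod_type, Fin.sum_univ_three]
    have hval : ∀ (a : Fin 3) (σ : Fin L → Fin 3),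
        (Fin.consEquiv fun _ : Fin (L + 1) => Fin 3) (a, σ) = Fin.cons a σ := fun _ _ => rfl
    have hcond : ∀ (a : Fin 3) (σ : Fin L → Fin 3),
        (∀ i, (Fin.cons a σ : Fin (L+1) → Fin 3) i ≠ 2) ↔ (a ≠ 2 ∧ ∀ i, σ i ≠ 2) := by
      intro a σ
      constructor
      · intro h
        exact ⟨by simpa using h 0, fun i => by simpa using h i.succ⟩
      · rintro ⟨h1, h2⟩ i
        rcases Fin.eq_zero_or_eq_succ i with rfl | ⟨j, rfl⟩
        · simpa using h1
        · simpa using h2 j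
    have hterm : ∀ (a : Fin 3) (σ : Fin L → Fin 3),
        rowWord v (List.ofFn (Fin.cons a σ)) k
          = rowWord (rowMul v (Xmat a)) (List.ofFn σ) k := by
      intro a σ
      rw [ofFn_cons, rowWord_cons]
    have hpiece : ∀ a : Fin 3, a ≠ 2 →
        (∑ σ : Fin L → Fin 3,
          if (∀ i, (Fin.consEquiv fun _ : Fin (L + 1) => Fin 3) (a, σ) i ≠ 2) then
            rowWord v (List.ofFn ((Fin.consEquiv fun _ : Fin (L + 1) => Fin 3) (a, σ))) k
          else 0)
          = step^[L] (rowMul v (Xmat a)) k := by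
      intro a ha
      rw [← ih (rowMul v (Xmat a)) k]
      have hY : Y L 0 = Finset.univ.filter fun σ : Fin L → Fin 3 => ∀ i, σ i ≠ 2 := by
        ext σ; rw [mem_Y_zero]; simp
      rw [hY, Finset.sum_filter]
      refine Finset.sum_congr rfl fun σ _ => ?_
      rw [hval, hterm]
      rcases Classical.em (∀ i, σ i ≠ 2) with h | h
      · rw [if_pos ((hcond a σ).2 ⟨ha, h⟩), if_pos h]
      · rw [if_neg (fun hh => h ((hcond a σ).1 hh).2), if_neg h]
    have hpiece2 :
        (∑ σ : Fin L → Fin 3,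
          if (∀ i, (Fin.consEquiv fun _ : Fin (L + 1) => Fin 3) ((2 : Fin 3), σ) i ≠ 2) then
            rowWord v (List.ofFn ((Fin.consEquiv fun _ : Fin (L + 1) => Fin 3) ((2 : Fin 3), σ))) k
          else 0) = 0 := by
      refine Finset.sum_eq_zero fun σ _ => ?_
      rw [hval, if_neg]
      intro h
      exact (((hcond 2 σ).1 h).1) rfl
    rw [hpiece 0 (by decide), hpiece 1 (by decide), hpiece2, add_zero]
    have : (fun j => rowMul v (Xmat 0) j + rowMul v (Xmat 1) j) = step v := by
      funext j
      show rowMul v X0 j + rowMul v X1 j = step v j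
      rw [rowMul_X0, rowMul_X1, step]
    rw [show step^[L] (rowMul v (Xmat 0)) k + step^[L] (rowMul v (Xmat 1)) k
        = step^[L] (fun j => rowMul v (Xmat 0) j + rowMul v (Xmat 1) j) k from
        by rw [step_iter_add], this, ← Function.iterate_succ_apply]


/-- `g L k = (e₀ᵀ (X₀+X₁)^L)_k`. -/
def g (L : ℕ) : ℕ → ℝ := step^[L] (W 1)

lemma g_succ (L : ℕ) : g (L + 1) = step (g L) :=
  Function.iterate_succ_apply' step L (W 1)

lemma g_zero_eq (k : ℕ) : g 0 k = if k = 0 then 1 else 0 := by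
  show W 1 k = _
  rw [W_one]

lemma g_nonneg : ∀ L k, 0 ≤ g L k := by
  intro L
  induction L with
  | zero =>
    intro k
    rw [g_zero_eq]
    rcases eq_or_ne k 0 with h | h <;> simp [h]
  | succ L ih =>
    intro k
    rw [g_succ, step]
    rcases eq_or_ne k 0 with h | h
    · subst h
      simp only [if_pos rfl, zero_add, if_true, add_zero]
      linarith [ih 0, ih 1]
    · rw [if_neg h]
      linarith [ih k, ih (k + 1), ih (k - 1)]

lemma g_vanish : ∀ L k, L < k → g L k = 0 := by
  intro L
  induction L with
  | zero =>
    intro k hk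
    rw [g_zero_eq, if_neg (by omega)]
  | succ L ih =>
    intro k hk
    rw [g_succ, step, if_neg (by omega), ih k (by omega), ih (k + 1) (by omega),
      ih (k - 1) (by omega)]
    ring

lemma Z_eq (β : ℝ) (L : ℕ) :
    Z 1 β L 0 = ∑ i ∈ Finset.range (L + 1), g L i * V β i := by
  rw [Z]
  have hterm : ∀ τ ∈ Y L 0, wt 1 β τ
      = ∑ i ∈ Finset.range (L + 1), rowWord (W 1) (List.ofFn τ) i * V β i := by
    intro τ _
    rw [wt, pairing]
    refine tsum_eq_sum fun i hi => ?_
    rw [rowWord_vanish (List.ofFn τ) (W 1) 1 ?_ i ?_, zero_mul]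
    · intro j hj
      rw [W_one]
      exact if_neg (by omega)
    · simp only [List.length_ofFn]
      simp only [Finset.mem_range, not_lt] at hi
      omega
  rw [Finset.sum_congr rfl hterm, Finset.sum_comm]
  refine Finset.sum_congr rfl fun i _ => ?_
  rw [← Finset.sum_mul, sum_rowWord]
  rfl


lemma g_succ_zero (L : ℕ) : g (L+1) 0 = 2 * g L 0 + g L 1 := by
  rw [g_succ]
  show (g L 0 + g L 1) + (g L 0 + if (0:ℕ) = 0 then 0 else g L (0-1))
      = 2 * g L 0 + g L 1
  rw [if_pos rfl]
  ring

lemma g_succ_succ (L m : ℕ) :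
    g (L+1) (m+1) = 2 * g L (m+1) + g L (m+1+1) + g L m := by
  rw [g_succ]
  show (g L (m+1) + g L (m+1+1)) + (g L (m+1) + if m+1 = 0 then 0 else g L (m+1-1))
      = 2 * g L (m+1) + g L (m+1+1) + g L m
  rw [if_neg (Nat.succ_ne_zero m), Nat.add_sub_cancel]
  ring

lemma g_zero_zero : g 0 0 = 1 := by rw [g_zero_eq, if_pos rfl]
lemma g_zero_succ (m : ℕ) : g 0 (m+1) = 0 := by
  rw [g_zero_eq, if_neg (Nat.succ_ne_zero m)]

lemma homog_vanish (u : ℝ) (hu0 : 0 ≤ u) (hu4 : u ≤ 1/4) (d : ℕ → ℝ) (M : ℝ)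
    (hd0 : ∀ k, 0 ≤ d k) (hdM : ∀ k, d k ≤ M)
    (hfp0 : d 0 = u * (2 * d 0 + d 1))
    (hfpS : ∀ m : ℕ, d (m+1) = u * (2 * d (m+1) + d (m+2) + d m)) :
    ∀ k, d k = 0 := by
  rcases eq_or_lt_of_le hu0 with hu | hupos
  · have hz : ∀ k, d k = 0 := by
      intro k
      rcases k with _ | m
      · rw [hfp0, ← hu, zero_mul]
      · rw [hfpS m, ← hu, zero_mul]
    exact hz
  have mono : ∀ m : ℕ, d (m+1) - d m ≤ d (m+2) - d (m+1) := by
    intro m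
    have h1 := hfpS m
    have key : u * (d (m+1) - d m) ≤ u * (d (m+2) - d (m+1)) := by
      nlinarith [hd0 (m+1)]
    exact le_of_mul_le_mul_left key hupos
  have mono' : ∀ j k : ℕ, j ≤ k → d (j+1) - d j ≤ d (k+1) - d k := by
    intro j k hjk
    induction k, hjk using Nat.le_induction with
    | base => exact le_refl _
    | succ k hk ih => exact le_trans ih (mono k)
  have inc0 : 0 ≤ d 1 - d 0 := by
    have key : u * 0 ≤ u * (d 1 - d 0) := by
      nlinarith [mul_nonneg (hd0 0) (show (0:ℝ) ≤ 1 - 3*u by linarith)]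
    exact le_of_mul_le_mul_left key hupos
  have incnn : ∀ k : ℕ, 0 ≤ d (k+1) - d k :=
    fun k => le_trans inc0 (mono' 0 k (Nat.zero_le k))
  have growth : ∀ j n : ℕ, d j + (n : ℝ) * (d (j+1) - d j) ≤ d (j + n) := by
    intro j n
    induction n with
    | zero => simp
    | succ n ih =>
      have h2 := mono' j (j+n) (Nat.le_add_right j n)
      have h4 : j + (n+1) = j + n + 1 := rfl
      rw [h4]
      push_cast
      linarith
  have incle0 : ∀ j : ℕ, d (j+1) - d j ≤ 0 := by
    intro j
    by_contra hpos
    push_neg at hpos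
    obtain ⟨n, hn⟩ := exists_nat_gt ((M - d j) / (d (j+1) - d j))
    have h2 : M - d j < (n : ℝ) * (d (j+1) - d j) := (div_lt_iff₀ hpos).mp hn
    linarith [hdM (j + n), growth j n]
  have dconst : ∀ k, d k = d 0 := by
    intro k
    induction k with
    | zero => rfl
    | succ k ih =>
      have := le_antisymm (incle0 k) (incnn k)
      linarith
  have d0 : d 0 = 0 := by
    have h1 : d 1 = d 0 := dconst 1
    rw [h1] at hfp0
    nlinarith [hd0 0, mul_le_mul_of_nonneg_right hu4 (hd0 0)]
  intro k
  rw [dconst k, d0]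

/-- Candidate value for the column generating functions. -/
def hfun (c : ℝ) : ℕ → ℝ := fun k => (c / (1 - c))^k / (1 - c)^2

lemma hfun_nonneg {c : ℝ} (hc0 : 0 ≤ c) (hc2 : c ≤ 1/2) (k : ℕ) : 0 ≤ hfun c k := by
  have h1 : (0:ℝ) < 1 - c := by linarith
  rw [hfun]
  positivity

lemma hfun_le {c : ℝ} (hc0 : 0 ≤ c) (hc2 : c ≤ 1/2) (k : ℕ) :
    hfun c k ≤ 1 / (1 - c)^2 := by
  have h1 : (0:ℝ) < 1 - c := by linarith
  rw [hfun]
  gcongr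
  exact pow_le_one₀ (by positivity) (by rw [div_le_one h1]; linarith)

lemma hfun_fp_zero {c : ℝ} (hc2 : c ≤ 1/2) :
    hfun c 0 = 1 + (c * (1 - c)) * (2 * hfun c 0 + hfun c 1) := by
  have h1' : (1:ℝ) - c ≠ 0 := by intro h; rw [sub_eq_zero] at h; linarith [h.symm]
  simp only [hfun, pow_zero, pow_one]
  field_simp
  ring

lemma hfun_fp_succ {c : ℝ} (hc2 : c ≤ 1/2) (m : ℕ) :
    hfun c (m+1) = (c * (1 - c)) * (2 * hfun c (m+1) + hfun c (m+1+1) + hfun c m) := by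
  have h1' : (1:ℝ) - c ≠ 0 := by intro h; rw [sub_eq_zero] at h; linarith [h.symm]
  have hxu : c * (1 - c) * (2 * (c/(1-c)) + (c/(1-c)) * (c/(1-c)) + 1) = c/(1-c) := by
    field_simp
    ring
  have hstep : ∀ n : ℕ, hfun c (n+1) = (c/(1-c)) * hfun c n := by
    intro n
    simp only [hfun, pow_succ]
    ring
  rw [hstep (m+1), hstep m]
  linear_combination (-(hfun c m)) * hxu

section FixedC

variable {c u : ℝ} (hc0 : 0 ≤ c) (hc2 : c ≤ 1/2) (hcu : c * (1 - c) = u)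

include hc0 hc2 hcu

lemma u_nonneg : 0 ≤ u := by nlinarith
lemma u_le4 : u ≤ 1/4 := by nlinarith

lemma partial_le : ∀ (N : ℕ) (k : ℕ),
    ∑ L ∈ Finset.range N, u^L * g L k ≤ hfun c k := by
  intro N
  induction N with
  | zero => intro k; simpa using hfun_nonneg hc0 hc2 k
  | succ N ih =>
    have hu0 : 0 ≤ u := u_nonneg hc0 hc2 hcu
    intro k
    rw [Finset.sum_range_succ']
    rcases k with _ | m
    · have hform : ∀ L : ℕ, u^(L+1) * g (L+1) 0
          = 2*u*(u^L * g L 0) + u*(u^L * g L 1) := by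
        intro L
        rw [g_succ_zero, pow_succ]
        ring
      rw [Finset.sum_congr rfl fun L _ => hform L, Finset.sum_add_distrib,
        ← Finset.mul_sum, ← Finset.mul_sum, pow_zero, one_mul, g_zero_zero]
      have hb := hfun_fp_zero (c := c) hc2
      rw [hcu] at hb
      nlinarith [mul_le_mul_of_nonneg_left (ih 0) hu0,
        mul_le_mul_of_nonneg_left (ih 1) hu0]
    · have hform : ∀ L : ℕ, u^(L+1) * g (L+1) (m+1)
          = 2*u*(u^L * g L (m+1)) + u*(u^L * g L (m+1+1)) + u*(u^L * g L m) := by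
        intro L
        rw [g_succ_succ, pow_succ]
        ring
      rw [Finset.sum_congr rfl fun L _ => hform L, Finset.sum_add_distrib,
        Finset.sum_add_distrib, ← Finset.mul_sum, ← Finset.mul_sum, ← Finset.mul_sum,
        pow_zero, one_mul, g_zero_succ]
      have hb := hfun_fp_succ (c := c) hc2 m
      rw [hcu] at hb
      nlinarith [mul_le_mul_of_nonneg_left (ih (m+1)) hu0,
        mul_le_mul_of_nonneg_left (ih (m+1+1)) hu0,
        mul_le_mul_of_nonneg_left (ih m) hu0]

lemma col_summable (k : ℕ) : Summable (fun L => u^L * g L k) :=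
  summable_of_sum_range_le
    (fun L => mul_nonneg (pow_nonneg (u_nonneg hc0 hc2 hcu) L) (g_nonneg L k))
    (fun N => partial_le hc0 hc2 hcu N k)

lemma tsum_le_hfun (k : ℕ) : (∑' L, u^L * g L k) ≤ hfun c k :=
  Summable.tsum_le_of_sum_range_le (col_summable hc0 hc2 hcu k)
    (fun N => partial_le hc0 hc2 hcu N k)

lemma tsum_fp_zero : (∑' L, u^L * g L 0)
    = 1 + u * (2 * (∑' L, u^L * g L 0) + (∑' L, u^L * g L 1)) := by
  have e1 : ∀ L : ℕ, u^(L+1) * g (L+1) 0 = 2*u*(u^L * g L 0) + u*(u^L * g L 1) := by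
    intro L
    rw [g_succ_zero, pow_succ]
    ring
  conv_lhs => rw [Summable.tsum_eq_zero_add (col_summable hc0 hc2 hcu 0), tsum_congr e1,
    Summable.tsum_add ((col_summable hc0 hc2 hcu 0).mul_left (2*u))
      ((col_summable hc0 hc2 hcu 1).mul_left u),
    tsum_mul_left, tsum_mul_left]
  rw [pow_zero, one_mul, g_zero_zero]
  ring

lemma tsum_fp_succ (m : ℕ) : (∑' L, u^L * g L (m+1))
    = u * (2 * (∑' L, u^L * g L (m+1)) + (∑' L, u^L * g L (m+1+1))
        + (∑' L, u^L * g L m)) := by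
  have e1 : ∀ L : ℕ, u^(L+1) * g (L+1) (m+1)
      = 2*u*(u^L * g L (m+1)) + u*(u^L * g L (m+1+1)) + u*(u^L * g L m) := by
    intro L
    rw [g_succ_succ, pow_succ]
    ring
  conv_lhs => rw [Summable.tsum_eq_zero_add (col_summable hc0 hc2 hcu (m+1)), tsum_congr e1,
    Summable.tsum_add (((col_summable hc0 hc2 hcu (m+1)).mul_left (2*u)).add
      ((col_summable hc0 hc2 hcu (m+1+1)).mul_left u))
      ((col_summable hc0 hc2 hcu m).mul_left u),
    Summable.tsum_add ((col_summable hc0 hc2 hcu (m+1)).mul_left (2*u))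
      ((col_summable hc0 hc2 hcu (m+1+1)).mul_left u),
    tsum_mul_left, tsum_mul_left, tsum_mul_left]
  rw [pow_zero, one_mul, g_zero_succ]
  ring

lemma tsum_eq_hfun (k : ℕ) : (∑' L, u^L * g L k) = hfun c k := by
  have hu0 : 0 ≤ u := u_nonneg hc0 hc2 hcu
  have hu4 : u ≤ 1/4 := u_le4 hc0 hc2 hcu
  set d : ℕ → ℝ := fun k => hfun c k - ∑' L, u^L * g L k with hd
  have hd0 : ∀ k, 0 ≤ d k := fun k =>
    sub_nonneg.2 (tsum_le_hfun hc0 hc2 hcu k)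
  have hdM : ∀ k, d k ≤ 1/(1-c)^2 := by
    intro k
    have h1 : 0 ≤ ∑' L, u^L * g L k :=
      tsum_nonneg fun L => mul_nonneg (pow_nonneg hu0 L) (g_nonneg L k)
    have h2 := hfun_le hc0 hc2 k
    simp only [hd]
    linarith
  have hdfp0 : d 0 = u * (2 * d 0 + d 1) := by
    have h1 := hfun_fp_zero (c := c) hc2
    rw [hcu] at h1
    have h2 := tsum_fp_zero hc0 hc2 hcu
    simp only [hd]
    linear_combination h1 - h2
  have hdfpS : ∀ m : ℕ, d (m+1) = u * (2 * d (m+1) + d (m+2) + d m) := by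
    intro m
    have h1 := hfun_fp_succ (c := c) hc2 m
    rw [hcu] at h1
    have h2 := tsum_fp_succ hc0 hc2 hcu m
    simp only [hd]
    linear_combination h1 - h2
  have hvan := homog_vanish u hu0 hu4 d (1/(1-c)^2) hd0 hdM hdfp0 hdfpS k
  simp only [hd] at hvan
  linarith

lemma double_sum (γ : ℝ) (hγ0 : 0 ≤ γ) (hc1 : (0:ℝ) < 1 - c)
    (hγx1 : γ * (c/(1-c)) < 1) :
    Summable (fun L : ℕ => ∑' k : ℕ, γ^k * (u^L * g L k)) ∧
    (∑' (L : ℕ), ∑' (k : ℕ), γ^k * (u^L * g L k))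
      = (1 - γ * (c/(1-c)))⁻¹ * (1/(1-c)^2) := by
  have hu0 : 0 ≤ u := u_nonneg hc0 hc2 hcu
  have hγx0 : 0 ≤ γ * (c/(1-c)) := mul_nonneg hγ0 (div_nonneg hc0 hc1.le)
  have hgeom : ∀ k : ℕ, γ^k * hfun c k = (γ * (c/(1-c)))^k * (1/(1-c)^2) := by
    intro k
    rw [hfun, mul_pow]
    ring
  have hsumgeom : Summable (fun k : ℕ => γ^k * hfun c k) :=
    (summable_congr hgeom).mpr ((summable_geometric_of_lt_one hγx0 hγx1).mul_right _)
  have he : ∀ k : ℕ, (∑' L, γ^k * (u^L * g L k)) = γ^k * hfun c k := by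
    intro k
    rw [tsum_mul_left, tsum_eq_hfun hc0 hc2 hcu k]
  have hnn : (0 : ℕ × ℕ → ℝ) ≤ fun p : ℕ × ℕ => γ^p.1 * (u^p.2 * g p.2 p.1) := fun p =>
    mul_nonneg (pow_nonneg hγ0 _) (mul_nonneg (pow_nonneg hu0 _) (g_nonneg _ _))
  have hF2 : Summable (fun p : ℕ × ℕ => γ^p.1 * (u^p.2 * g p.2 p.1)) := by
    apply (summable_prod_of_nonneg hnn).mpr
    constructor
    · intro k
      show Summable fun L : ℕ => γ^k * (u^L * g L k)
      exact (col_summable hc0 hc2 hcu k).mul_left (γ^k)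
    · show Summable fun k : ℕ => ∑' L : ℕ, γ^k * (u^L * g L k)
      exact (summable_congr he).mpr hsumgeom
  have hF2' : Summable (fun p : ℕ × ℕ => γ^p.2 * (u^p.1 * g p.1 p.2)) := by
    have h := (Equiv.prodComm ℕ ℕ).summable_iff.mpr hF2
    exact h
  have hnn' : (0 : ℕ × ℕ → ℝ) ≤ fun p : ℕ × ℕ => γ^p.2 * (u^p.1 * g p.1 p.2) := fun p =>
    mul_nonneg (pow_nonneg hγ0 _) (mul_nonneg (pow_nonneg hu0 _) (g_nonneg _ _))
  have hrow := (summable_prod_of_nonneg hnn').mp hF2'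
  have hrow1 : ∀ L : ℕ, Summable fun k : ℕ => γ^k * (u^L * g L k) := hrow.1
  have hrow2 : Summable fun L : ℕ => ∑' k : ℕ, γ^k * (u^L * g L k) := hrow.2
  refine ⟨hrow2, ?_⟩
  have hsplit2 : (∑' p : ℕ × ℕ, γ^p.2 * (u^p.1 * g p.1 p.2))
      = ∑' (L : ℕ), ∑' (k : ℕ), γ^k * (u^L * g L k) :=
    Summable.tsum_prod' hF2' hrow1
  have hswap : (∑' p : ℕ × ℕ, γ^p.2 * (u^p.1 * g p.1 p.2))
      = ∑' p : ℕ × ℕ, γ^p.1 * (u^p.2 * g p.2 p.1) :=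
    (Equiv.prodComm ℕ ℕ).tsum_eq (fun p : ℕ × ℕ => γ^p.1 * (u^p.2 * g p.2 p.1))
  have hsplit : (∑' p : ℕ × ℕ, γ^p.1 * (u^p.2 * g p.2 p.1))
      = ∑' (k : ℕ), ∑' (L : ℕ), γ^k * (u^L * g L k) :=
    Summable.tsum_prod' hF2 (fun k => (col_summable hc0 hc2 hcu k).mul_left (γ^k))
  rw [← hsplit2, hswap, hsplit, tsum_congr he, tsum_congr hgeom, tsum_mul_right,
    tsum_geometric_of_lt_one hγx0 hγx1]

end FixedC

set_option maxHeartbeats 1000000 in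
/-- normalization of the boundary gap distribution: for
`β ∈ (0,1]` and admissible `u ≥ 0`, the series `Σ_{l=0}^∞ uˡ Z^{1,β}(l,0)`
converges and equals `2β/(β(1+√(1−4u)) − 2u)`. -/
theorem boundary_gap_normalization (β u : ℝ)
    (hβ : β ∈ Set.Ioc (0 : ℝ) 1) (hu : 0 ≤ u)
    (hsmall : β ≤ 1 / 2 → u < β * (1 - β))
    (hlarge : 1 / 2 < β → u ≤ 1 / 4) :
    Summable (fun l : ℕ => u ^ l * Z 1 β l 0) ∧
    (∑' l : ℕ, u ^ l * Z 1 β l 0)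
      = 2 * β / (β * (1 + Real.sqrt (1 - 4 * u)) - 2 * u) := by
  obtain ⟨hβ0, hβ1⟩ := hβ
  have hu4 : u ≤ 1/4 := by
    rcases le_or_gt β (1/2) with h | h
    · nlinarith [hsmall h]
    · exact hlarge h
  have h4u : (0:ℝ) ≤ 1 - 4*u := by linarith
  set s := Real.sqrt (1 - 4 * u) with hs_def
  have hs0 : 0 ≤ s := Real.sqrt_nonneg _
  have hs2 : s^2 = 1 - 4*u := Real.sq_sqrt h4u
  have hs1 : s ≤ 1 := by nlinarith
  set c : ℝ := (1 - s)/2 with hc_def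
  have hc0 : 0 ≤ c := by rw [hc_def]; linarith
  have hc2 : c ≤ 1/2 := by rw [hc_def]; linarith
  have hcu : c * (1 - c) = u := by rw [hc_def]; nlinarith [hs2]
  have h1c : (0:ℝ) < 1 - c := by linarith
  have hcβ : c < β := by
    rcases le_or_gt β (1/2) with h | h
    · by_contra hcon
      push_neg at hcon
      nlinarith [hsmall h]
    · linarith
  set γ : ℝ := (1 - β)/β with hγ_def
  have hγ0 : 0 ≤ γ := div_nonneg (by linarith) (le_of_lt hβ0)
  have hγx1 : γ * (c/(1-c)) < 1 := by
    rw [hγ_def, div_mul_div_comm, div_lt_one (by positivity)]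
    nlinarith
  obtain ⟨hds, hdv⟩ := double_sum hc0 hc2 hcu γ hγ0 h1c hγx1
  have hZrow : ∀ L : ℕ, (∑' k, γ^k * (u^L * g L k)) = u^L * Z 1 β L 0 := by
    intro L
    rw [Z_eq β L, tsum_eq_sum (s := Finset.range (L+1)) ?_, Finset.mul_sum]
    · refine Finset.sum_congr rfl fun i _ => ?_
      rw [show V β i = γ^i from rfl]
      ring
    · intro k hk
      rw [g_vanish L k (by simpa using hk), mul_zero, mul_zero]
  have hsummZ : Summable (fun L : ℕ => u^L * Z 1 β L 0) :=
    (summable_congr hZrow).mp hds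
  refine ⟨hsummZ, ?_⟩
  have hD : β*(1+s) - 2*u = 2*(1-c)*(β-c) := by
    rw [← hcu]
    have hsc : s = 1 - 2*c := by rw [hc_def]; ring
    rw [hsc]
    ring
  have h1γx : 1 - γ*(c/(1-c)) = (β-c)/(β*(1-c)) := by
    rw [hγ_def]
    field_simp
    ring
  have hlast : (1 - γ * (c/(1-c)))⁻¹ * (1/(1-c)^2) = 2 * β / (β * (1 + s) - 2 * u) := by
    rw [hD, h1γx, inv_div]
    have hβc : β - c ≠ 0 := (sub_pos.2 hcβ).ne'
    field_simp
  rw [← tsum_congr hZrow, hdv, hlast]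


end TASEP
end
end
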